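/- arXiv:math/0506517 — 4 statements merged into one kernel-verified Lean document; each statement's English description precedes it below -/
import Mathlib

section
/- Let a ∈ ℂ and r > 0, and let λ, μ ∈ ℂ satisfy |λ − a| < r and |μ − a| > r. Then ∫_0^{2π} 1 / ((a + r·e^{iθ} − λ) · conj(a + r·e^{iθ} − μ)) dθ = 0. -/
open MeasureTheory Real

lemma circle_int_two_inv_zero (p q : ℂ) (hp : ‖p‖ < 1) (hq : ‖q‖ < 1) :
    (∮ z in C(0, 1), (z - p)⁻¹ * (z - q)⁻¹) = 0 := by
  have hps : p ∉ Metric.sphere (0:ℂ) |1| := by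
    simp only [Metric.mem_sphere, dist_zero_right, abs_one]
    exact hp.ne
  have hqs : q ∉ Metric.sphere (0:ℂ) |1| := by
    simp only [Metric.mem_sphere, dist_zero_right, abs_one]
    exact hq.ne
  rcases eq_or_ne p q with rfl | hpq
  · have : (∮ z in C(0, 1), (z - p)⁻¹ * (z - p)⁻¹)
        = ∮ z in C(0, 1), (z - p) ^ (-2 : ℤ) := by
      apply circleIntegral.integral_congr zero_le_one
      intro z _
      show (z - p)⁻¹ * (z - p)⁻¹ = (z - p) ^ (-2 : ℤ)
      rw [← mul_inv, zpow_neg, ← sq]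
      norm_num
    rw [this]
    exact circleIntegral.integral_sub_zpow_of_ne (by decide) 0 p 1
  · have h1 : CircleIntegrable (fun z => (z - p)⁻¹) 0 1 :=
      circleIntegrable_sub_inv_iff.2 (Or.inr hps)
    have h2 : CircleIntegrable (fun z => (z - q)⁻¹) 0 1 :=
      circleIntegrable_sub_inv_iff.2 (Or.inr hqs)
    have key : (∮ z in C(0, 1), (z - p)⁻¹ * (z - q)⁻¹)
        = ∮ z in C(0, 1), (p - q)⁻¹ • ((z - p)⁻¹ - (z - q)⁻¹) := by
      apply circleIntegral.integral_congr zero_le_one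
      intro z hz
      have hz1 : ‖z‖ = 1 := by simpa using hz
      have hzp : z - p ≠ 0 := sub_ne_zero.2 fun h => by rw [h] at hz1; exact absurd hz1 hp.ne
      have hzq : z - q ≠ 0 := sub_ne_zero.2 fun h => by rw [h] at hz1; exact absurd hz1 hq.ne
      have hpq' : p - q ≠ 0 := sub_ne_zero.2 hpq
      show (z - p)⁻¹ * (z - q)⁻¹ = (p - q)⁻¹ • ((z - p)⁻¹ - (z - q)⁻¹)
      rw [smul_eq_mul]
      field_simp
      ring

    rw [key, circleIntegral.integral_smul, circleIntegral.integral_sub h1 h2,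
      circleIntegral.integral_sub_inv_of_mem_ball (by simpa using hp),
      circleIntegral.integral_sub_inv_of_mem_ball (by simpa using hq)]
    simp

/-- On a circle of center `a` and radius `r` with constant weight, the Cauchy kernel
of an interior point `λ` is orthogonal to the Cauchy kernel of an exterior point `μ`. -/
theorem cauchy_kernels_orthogonal_on_circle
    (a : ℂ) (r : ℝ) (hr : 0 < r) (lam mu : ℂ)
    (hlam : ‖lam - a‖ < r) (hmu : r < ‖mu - a‖) :
    ∫ θ in (0:ℝ)..(2 * π),
      1 / ((a + r * Complex.exp (θ * Complex.I) - lam) *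
            (starRingEnd ℂ) (a + r * Complex.exp (θ * Complex.I) - mu)) = 0 := by
  set d : ℂ := (starRingEnd ℂ) (mu - a) with hd_def
  have hd_abs : ‖d‖ = ‖mu - a‖ := Complex.norm_conj _
  have hr0 : (r : ℂ) ≠ 0 := Complex.ofReal_ne_zero.2 hr.ne'
  have hd0 : d ≠ 0 := by
    intro h
    rw [h] at hd_abs
    simp at hd_abs
    exact absurd (hd_abs ▸ hmu) (by simp [← hd_abs]; linarith)
  set p : ℂ := (lam - a) / r with hp_def
  set q : ℂ := (r : ℂ) / d with hq_def
  have hp : ‖p‖ < 1 := by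
    rw [hp_def, norm_div]
    simp only [Complex.norm_real, Real.norm_eq_abs, abs_of_pos hr]
    rw [div_lt_one hr]
    exact hlam
  have hq : ‖q‖ < 1 := by
    rw [hq_def, norm_div, hd_abs]
    simp only [Complex.norm_real, Real.norm_eq_abs, abs_of_pos hr]
    rw [div_lt_one (lt_trans hr hmu)]
    exact hmu
  set K : ℂ := Complex.I / ((r : ℂ) * d) with hK_def
  have key : ∀ θ : ℝ,
      1 / ((a + r * Complex.exp (θ * Complex.I) - lam) *
            (starRingEnd ℂ) (a + r * Complex.exp (θ * Complex.I) - mu))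
      = K * (deriv (circleMap 0 1) θ *
          ((circleMap 0 1 θ - p)⁻¹ * (circleMap 0 1 θ - q)⁻¹)) := by
    intro θ
    have hz : circleMap 0 1 θ = Complex.exp (θ * Complex.I) := by
      simp [circleMap]
    set e : ℂ := Complex.exp (θ * Complex.I) with he_def
    have he0 : e ≠ 0 := Complex.exp_ne_zero _
    have habs_e : ‖e‖ = 1 := by
      rw [he_def]
      simpa using Complex.norm_exp_ofReal_mul_I θ
    have hce : (starRingEnd ℂ) e = e⁻¹ := by
      rw [he_def, ← Complex.exp_conj, ← Complex.exp_neg]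
      congr 1
      simp
    have hconj : (starRingEnd ℂ) (a + r * e - mu) = (r : ℂ) * e⁻¹ - d := by
      have h : a + r * e - mu = (r : ℂ) * e - (mu - a) := by ring
      rw [h, map_sub, map_mul, Complex.conj_ofReal, hce, hd_def]
    have h3 : e - p ≠ 0 := sub_ne_zero.2 fun h => by
      rw [← h] at hp; rw [habs_e] at hp; exact lt_irrefl 1 hp
    have h4 : e - q ≠ 0 := sub_ne_zero.2 fun h => by
      rw [← h] at hq; rw [habs_e] at hq; exact lt_irrefl 1 hq
    have h1 : a + r * e - lam ≠ 0 := by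
      have : a + r * e - lam = (r : ℂ) * (e - p) := by
        rw [hp_def]; field_simp; ring
      rw [this]
      exact mul_ne_zero hr0 (by exact h3)
    have h2 : (r : ℂ) * e⁻¹ - d ≠ 0 := by
      intro h
      have : (r : ℂ) * e⁻¹ = d := by linear_combination h
      have habs : ‖(r:ℂ) * e⁻¹‖ = r := by
        simp [norm_mul, norm_inv, habs_e, abs_of_pos hr]
      rw [this, hd_abs] at habs
      exact absurd habs (by linarith)
    have fact1 : a + ↑r * e - lam = ↑r * (e - p) := by
      rw [hp_def]; field_simp; ring
    have fact2 : (↑r : ℂ) * e⁻¹ - d = -(d * e⁻¹ * (e - q)) := by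
      rw [hq_def]; field_simp; ring
    rw [hconj, hz, deriv_circleMap, hz, fact1, fact2, hK_def]
    field_simp
    ring_nf
    simp only [Complex.I_sq]
  rw [intervalIntegral.integral_congr (g := fun θ => K * (deriv (circleMap 0 1) θ *
          ((circleMap 0 1 θ - p)⁻¹ * (circleMap 0 1 θ - q)⁻¹))) (fun θ _ => key θ),
    intervalIntegral.integral_const_mul]
  have : (∫ θ in (0:ℝ)..(2*π), deriv (circleMap 0 1) θ *
          ((circleMap 0 1 θ - p)⁻¹ * (circleMap 0 1 θ - q)⁻¹))
      = ∮ z in C(0, 1), (z - p)⁻¹ * (z - q)⁻¹ := by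
    simp only [circleIntegral, smul_eq_mul]
  rw [this, circle_int_two_inv_zero p q hp hq, mul_zero]
end

section
/- Let w : ℝ → ℂ be integrable on [0, 2π] and let λ ∈ ℂ with |λ| < 1. Suppose that for every μ ∈ ℂ with |μ| > 1 one has ∫_0^{2π} w(θ) / ((e^{iθ} − λ) · (e^{−iθ} − conj(μ))) dθ = 0. Then ∫_0^{2π} w(θ) / (e^{iθ} − λ) dθ = 0. -/
open MeasureTheory Real
open Filter Topology

/-- First step of the proof of the Theorem: from the orthogonality relations with all
exterior points `μ`, letting `μ → ∞` yields the vanishing of the Cauchy transform of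
the weight at the interior point `λ`. -/
theorem cauchy_transform_vanishes_of_orthogonality
    (w : ℝ → ℂ)
    (hw : IntegrableOn w (Set.Icc 0 (2 * π)))
    (lam : ℂ) (hlam : ‖lam‖ < 1)
    (horth : ∀ mu : ℂ, 1 < ‖mu‖ →
      ∫ θ in (0:ℝ)..(2 * π),
        w θ /
          ((Complex.exp (θ * Complex.I) - lam) *
            (Complex.exp (-θ * Complex.I) - (starRingEnd ℂ) mu)) = 0) :
    ∫ θ in (0:ℝ)..(2 * π), w θ / (Complex.exp (θ * Complex.I) - lam) = 0 := by
  have h2π : (0:ℝ) ≤ 2 * π := by positivity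
  set E : ℝ → ℂ := fun θ => Complex.exp (θ * Complex.I) with hEdef
  set E' : ℝ → ℂ := fun θ => Complex.exp (-θ * Complex.I) with hE'def
  have hE : ∀ θ : ℝ, ‖E θ‖ = 1 := fun θ => Complex.norm_exp_ofReal_mul_I θ
  have hE' : ∀ θ : ℝ, ‖E' θ‖ = 1 := fun θ => by
    have := Complex.norm_exp_ofReal_mul_I (-θ)
    simpa [hE'def] using this
  have hlam' : 0 < 1 - ‖lam‖ := by linarith
  have hden : ∀ θ : ℝ, E θ - lam ≠ 0 := by
    intro θ h
    rw [sub_eq_zero] at h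
    rw [← h, hE θ] at hlam
    linarith
  have hdenlb : ∀ θ : ℝ, 1 - ‖lam‖ ≤ ‖E θ - lam‖ := by
    intro θ
    have := norm_sub_norm_le (E θ) lam
    rw [hE θ] at this
    linarith
  have hnc : ∀ n : ℕ, ‖(n:ℂ)+2‖ = (n:ℝ)+2 := by
    intro n
    have : ((n:ℂ)+2) = (((n:ℝ)+2 : ℝ) : ℂ) := by push_cast; ring
    rw [this, Complex.norm_real, Real.norm_eq_abs]
    exact abs_of_nonneg (by positivity)
  have hden2lb : ∀ (n : ℕ) (θ : ℝ), (n:ℝ)+1 ≤ ‖((n:ℂ)+2) - E' θ‖ := by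
    intro n θ
    have := norm_sub_norm_le ((n:ℂ)+2) (E' θ)
    rw [hE' θ, hnc n] at this
    linarith
  have hden2 : ∀ (n : ℕ) (θ : ℝ), ((n:ℂ)+2) - E' θ ≠ 0 := by
    intro n θ h
    have := hden2lb n θ
    rw [h, norm_zero] at this
    have : (0:ℝ) ≤ (n:ℝ) := Nat.cast_nonneg n
    linarith
  -- the sequence of integrands
  set F : ℕ → ℝ → ℂ := fun n θ =>
    w θ * (((n:ℂ)+2) / ((E θ - lam) * (((n:ℂ)+2) - E' θ))) with hFdef
  -- each integral vanishes
  have hzero : ∀ n : ℕ, (∫ θ in (0:ℝ)..(2*π), F n θ) = 0 := by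
    intro n
    have hmu : 1 < ‖(n:ℂ)+2‖ := by
      rw [hnc n]
      have : (0:ℝ) ≤ (n:ℝ) := Nat.cast_nonneg n
      linarith
    have h0 := horth ((n:ℂ)+2) hmu
    have hconj : (starRingEnd ℂ) ((n:ℂ)+2) = (n:ℂ)+2 := by
      have h : ((n:ℂ)+2) = ((n+2:ℕ):ℂ) := by push_cast; ring
      rw [h, map_natCast]
    rw [hconj] at h0
    have hcalc : (∫ θ in (0:ℝ)..(2*π), F n θ)
        = (-(((n:ℂ)+2))) * ∫ θ in (0:ℝ)..(2*π),
            w θ / ((E θ - lam) * (E' θ - ((n:ℂ)+2))) := by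
      rw [← intervalIntegral.integral_const_mul]
      apply intervalIntegral.integral_congr
      intro θ _
      have h1 := hden θ
      have h2 := hden2 n θ
      have h3 : E' θ - ((n:ℂ)+2) ≠ 0 := by
        intro h; apply h2; rw [← neg_sub]; simp [sub_eq_zero] at h ⊢; exact h.symm
      simp only [hFdef]
      field_simp
      ring
    rw [hcalc, h0, mul_zero]
  -- dominated convergence
  have hwIoc : IntegrableOn w (Set.Ioc 0 (2*π)) := hw.mono_set Set.Ioc_subset_Icc_self
  have hcontE : Continuous E := by
    apply Complex.continuous_exp.comp
    exact (Complex.continuous_ofReal).mul continuous_const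
  have hcontE' : Continuous E' := by
    apply Complex.continuous_exp.comp
    exact (Complex.continuous_ofReal.neg).mul continuous_const
  have key : Tendsto (fun n : ℕ => ∫ θ in (0:ℝ)..(2*π), F n θ) atTop
      (𝓝 (∫ θ in (0:ℝ)..(2*π), w θ / (E θ - lam))) := by
    simp only [intervalIntegral.integral_of_le h2π]
    apply MeasureTheory.tendsto_integral_of_dominated_convergence
      (fun θ => (2/(1 - ‖lam‖)) * ‖w θ‖)
    · intro n
      apply AEStronglyMeasurable.mul hwIoc.aestronglyMeasurable
      apply Continuous.aestronglyMeasurable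
      apply Continuous.div continuous_const
      · exact ((hcontE.sub continuous_const).mul (continuous_const.sub hcontE'))
      · intro θ; exact mul_ne_zero (hden θ) (hden2 n θ)
    · exact (hwIoc.norm.const_mul _)
    · intro n
      apply Filter.Eventually.of_forall
      intro θ
      simp only [hFdef, norm_mul, norm_div]
      rw [mul_comm]
      apply mul_le_mul_of_nonneg_right _ (norm_nonneg _)
      have hA := hdenlb θ
      have hB := hden2lb n θ
      have hnn : (0:ℝ) ≤ (n:ℝ) := Nat.cast_nonneg n
      rw [hnc n]
      rw [div_le_div_iff₀ (mul_pos (lt_of_lt_of_le hlam' hA) (lt_of_lt_of_le (by linarith) hB)) hlam']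
      nlinarith [mul_le_mul hA hB (by linarith) (by linarith : (0:ℝ) ≤ ‖E θ - lam‖)]
    · apply Filter.Eventually.of_forall
      intro θ
      have hc : ‖E' θ‖ = 1 := hE' θ
      have hlim1 : Tendsto (fun n : ℕ => E' θ / ((n:ℂ)+2)) atTop (𝓝 0) := by
        rw [tendsto_zero_iff_norm_tendsto_zero]
        have heq : (fun n : ℕ => ‖E' θ / ((n:ℂ)+2)‖) = fun n : ℕ => ((n:ℝ)+2)⁻¹ := by
          funext n
          rw [norm_div]
          rw [hc, hnc n, one_div]
        rw [heq]
        apply Tendsto.inv_tendsto_atTop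
        apply Filter.tendsto_atTop_add_const_right
        exact tendsto_natCast_atTop_atTop
      have hlim2 : Tendsto (fun n : ℕ => (1 - E' θ / ((n:ℂ)+2))⁻¹) atTop (𝓝 1) := by
        have := (tendsto_const_nhds.sub hlim1).inv₀ (by simp : ((1:ℂ) - 0) ≠ 0)
        simpa using this
      have heq2 : ∀ n : ℕ, (1 - E' θ / ((n:ℂ)+2))⁻¹ = ((n:ℂ)+2) / (((n:ℂ)+2) - E' θ) := by
        intro n
        have hn2 : ((n:ℂ)+2) ≠ 0 := by
          intro h
          have := hnc n
          rw [h, norm_zero] at this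
          have : (0:ℝ) ≤ (n:ℝ) := Nat.cast_nonneg n
          linarith
        have h2 := hden2 n θ
        field_simp
      have hlim3 : Tendsto (fun n : ℕ => ((n:ℂ)+2) / (((n:ℂ)+2) - E' θ)) atTop (𝓝 1) := by
        apply hlim2.congr
        intro n; exact heq2 n
      have : Tendsto (fun n : ℕ => F n θ) atTop (𝓝 (w θ * ((E θ - lam)⁻¹ * 1))) := by
        apply Tendsto.const_mul
        have heq3 : ∀ n : ℕ, (((n:ℂ)+2) / ((E θ - lam) * (((n:ℂ)+2) - E' θ)))
            = (E θ - lam)⁻¹ * (((n:ℂ)+2) / (((n:ℂ)+2) - E' θ)) := by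
          intro n
          rw [div_mul_eq_div_div_swap, div_eq_mul_inv (((n:ℂ)+2) / (((n:ℂ)+2) - E' θ))]
          ring
        apply ((Tendsto.const_mul _ hlim3)).congr
        intro n
        exact (heq3 n).symm
      simpa [div_eq_mul_inv] using this
  have := hzero
  have hconst : Tendsto (fun n : ℕ => ∫ θ in (0:ℝ)..(2*π), F n θ) atTop (𝓝 0) := by
    simp only [hzero]
    exact tendsto_const_nhds
  exact tendsto_nhds_unique key hconst
end

section
/- Let w : ℝ → ℂ be integrable on [0, 2π]. Suppose that ∫_0^{2π} w(θ) / (e^{iθ} − λ) dθ = 0 for every λ ∈ ℂ with |λ| < 1. Then ∫_0^{2π} w(θ) · e^{−inθ} dθ = 0 for every integer n ≥ 1. -/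
open MeasureTheory Real

set_option maxHeartbeats 4000000 in
/-- Smirnov-theorem step on the unit circle: if the Cauchy transform of `w` vanishes at
every interior point, then all Fourier coefficients of `w` of positive index vanish. -/
theorem fourier_coeffs_vanish_of_cauchy_transform_vanishes_inside
    (w : ℝ → ℂ)
    (hw : IntegrableOn w (Set.Icc 0 (2 * π)))
    (hC : ∀ lam : ℂ, ‖lam‖ < 1 →
      ∫ θ in (0:ℝ)..(2 * π), w θ / (Complex.exp (θ * Complex.I) - lam) = 0) :
    ∀ n : ℤ, 1 ≤ n →
      ∫ θ in (0:ℝ)..(2 * π), w θ * Complex.exp (-(n : ℂ) * θ * Complex.I) = 0 := by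
  have hπ : (0:ℝ) ≤ 2 * π := by positivity
  set E : ℝ → ℂ := fun θ => Complex.exp (θ * Complex.I) with hE
  set e : ℕ → ℝ → ℂ := fun n θ => Complex.exp (-(n : ℂ) * θ * Complex.I) with he
  have habs : ∀ θ : ℝ, ‖E θ‖ = 1 := by
    intro θ
    simp [hE, Complex.norm_exp]
  have heabs : ∀ n θ, ‖e n θ‖ = 1 := by
    intro n θ
    simp [he, Complex.norm_exp]
  have hne : ∀ (lam : ℂ), ‖lam‖ < 1 → ∀ θ : ℝ, E θ - lam ≠ 0 := by
    intro lam hlam θ h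
    have h2 : E θ = lam := sub_eq_zero.mp h
    rw [← h2, habs θ] at hlam
    exact lt_irrefl 1 hlam
  have hlow : ∀ (lam : ℂ), ∀ θ : ℝ, 1 - ‖lam‖ ≤ ‖E θ - lam‖ := by
    intro lam θ
    have := norm_sub_norm_le (E θ) lam
    rw [habs θ] at this
    exact this
  have hgcont : ∀ (n : ℕ) (lam : ℂ), ‖lam‖ < 1 →
      Continuous (fun θ : ℝ => e n θ / (E θ - lam)) := by
    intro n lam hlam
    apply Continuous.div
    · exact Complex.continuous_exp.comp (by fun_prop)
    · exact (Complex.continuous_exp.comp (by fun_prop)).sub continuous_const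
    · exact fun θ => hne lam hlam θ
  have huIcc : Set.uIcc (0:ℝ) (2*π) = Set.Icc 0 (2*π) := Set.uIcc_of_le hπ
  have hInt : ∀ (n : ℕ) (lam : ℂ), ‖lam‖ < 1 →
      IntervalIntegrable (fun θ => w θ * (e n θ / (E θ - lam))) volume 0 (2*π) := by
    intro n lam hlam
    have ht : IntegrableOn (fun θ => w θ * (e n θ / (E θ - lam))) (Set.Icc 0 (2*π)) :=
      hw.mul_continuousOn (hgcont n lam hlam).continuousOn isCompact_Icc
    rw [← huIcc] at ht
    exact ht.intervalIntegrable
  have hIntc : ∀ (n : ℕ),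
      IntervalIntegrable (fun θ => w θ * e n θ) volume 0 (2*π) := by
    intro n
    have hc : Continuous (fun θ : ℝ => e n θ) :=
      Complex.continuous_exp.comp (by fun_prop)
    have ht : IntegrableOn (fun θ => w θ * e n θ) (Set.Icc 0 (2*π)) :=
      hw.mul_continuousOn hc.continuousOn isCompact_Icc
    rw [← huIcc] at ht
    exact ht.intervalIntegrable
  have hwn : IntervalIntegrable (fun θ : ℝ => ‖w θ‖) volume 0 (2*π) := by
    rw [intervalIntegrable_iff, Set.uIoc_of_le hπ]
    exact IntegrableOn.mono_set hw.norm Set.Ioc_subset_Icc_self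
  have h2wn : IntervalIntegrable (fun θ => 2 * ‖w θ‖) volume 0 (2*π) := hwn.const_mul 2
  set G : ℕ → ℂ → ℂ := fun n lam => ∫ θ in (0:ℝ)..(2*π), w θ * (e n θ / (E θ - lam)) with hG
  set c : ℕ → ℂ := fun n => ∫ θ in (0:ℝ)..(2*π), w θ * e n θ with hcdef
  have hmul : ∀ (n : ℕ) (θ : ℝ), e (n+1) θ * E θ = e n θ := by
    intro n θ
    rw [he, hE]
    simp only
    rw [← Complex.exp_add]
    congr 1
    push_cast
    ring
  -- recurrence
  have hrec : ∀ (n : ℕ) (lam : ℂ), ‖lam‖ < 1 → G n lam = c (n+1) + lam * G (n+1) lam := by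
    intro n lam hlam
    have hid : ∀ θ : ℝ, w θ * (e n θ / (E θ - lam))
        = w θ * e (n+1) θ + lam * (w θ * (e (n+1) θ / (E θ - lam))) := by
      intro θ
      have hd := hne lam hlam θ
      field_simp
      linear_combination (-(w θ)) * hmul n θ
    rw [hG]
    simp only
    rw [intervalIntegral.integral_congr (g := fun θ =>
        w θ * e (n+1) θ + lam * (w θ * (e (n+1) θ / (E θ - lam)))) (fun θ _ => hid θ)]
    rw [intervalIntegral.integral_add (hIntc (n+1)) ((hInt (n+1) lam hlam).const_mul lam),
      intervalIntegral.integral_const_mul]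
  set M : ℝ := ∫ θ in (0:ℝ)..(2*π), ‖w θ‖ with hM
  have hMnonneg : 0 ≤ M := intervalIntegral.integral_nonneg hπ (fun θ _ => norm_nonneg _)
  have hbound : ∀ (n : ℕ) (lam : ℂ), ‖lam‖ ≤ 1/2 → ‖G n lam‖ ≤ 2 * M := by
    intro n lam hlam
    have hlam1 : ‖lam‖ < 1 := lt_of_le_of_lt hlam (by norm_num)
    have hstep : ∀ θ : ℝ, ‖w θ * (e n θ / (E θ - lam))‖ ≤ 2 * ‖w θ‖ := by
      intro θ
      have hd : (1:ℝ)/2 ≤ ‖E θ - lam‖ := le_trans (by linarith [hlow lam θ]) (le_refl _)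
      have hd' : ‖e n θ / (E θ - lam)‖ ≤ 2 := by
        rw [norm_div, heabs]
        rw [div_le_iff₀ (by linarith)]
        linarith
      calc ‖w θ * (e n θ / (E θ - lam))‖ = ‖w θ‖ * ‖e n θ / (E θ - lam)‖ := norm_mul _ _
        _ ≤ ‖w θ‖ * 2 := by
            exact mul_le_mul_of_nonneg_left hd' (norm_nonneg _)
        _ = 2 * ‖w θ‖ := by ring
    have h5 : ‖G n lam‖ ≤ ∫ θ in (0:ℝ)..(2*π), ‖w θ * (e n θ / (E θ - lam))‖ :=
      intervalIntegral.norm_integral_le_integral_norm hπ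
    have h6 : (∫ θ in (0:ℝ)..(2*π), ‖w θ * (e n θ / (E θ - lam))‖)
        ≤ ∫ θ in (0:ℝ)..(2*π), 2 * ‖w θ‖ :=
      intervalIntegral.integral_mono_on hπ (hInt n lam hlam1).norm h2wn (fun θ _ => hstep θ)
    have h7 : (∫ θ in (0:ℝ)..(2*π), 2 * ‖w θ‖) = 2 * M := by
      rw [hM, intervalIntegral.integral_const_mul]
    linarith
  -- key step
  have hkey : ∀ (n : ℕ), (∀ lam : ℂ, ‖lam‖ < 1 → lam ≠ 0 → G n lam = 0) →
      c (n+1) = 0 ∧ ∀ lam : ℂ, ‖lam‖ < 1 → lam ≠ 0 → G (n+1) lam = 0 := by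
    intro n hP
    have hcz : c (n+1) = 0 := by
      have hcb : ∀ t : ℝ, 0 < t → t ≤ 1/2 → ‖c (n+1)‖ ≤ t * (2 * M) := by
        intro t ht ht2
        have hnorm : ‖(t:ℂ)‖ = t := by
          rw [Complex.norm_real, Real.norm_eq_abs, abs_of_pos ht]
        have hlt : ‖(t:ℂ)‖ < 1 := by rw [hnorm]; linarith
        have hne0 : (t:ℂ) ≠ 0 := by
          exact_mod_cast ne_of_gt ht
        have h0 := hP (t:ℂ) hlt hne0
        have h1 := hrec n (t:ℂ) hlt
        rw [h0] at h1
        have h2 : c (n+1) = -((t:ℂ) * G (n+1) (t:ℂ)) := by linear_combination -h1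
        rw [h2, norm_neg, norm_mul, hnorm]
        exact mul_le_mul_of_nonneg_left (hbound (n+1) (t:ℂ) (by rw [hnorm]; exact ht2)) (le_of_lt ht)
      have : ‖c (n+1)‖ ≤ 0 := by
        apply le_of_forall_pos_le_add
        intro ε hε
        have htpos : 0 < min (1/2 : ℝ) (ε / (2*M+1)) := by
          apply lt_min (by norm_num)
          positivity
        have := hcb _ htpos (min_le_left _ _)
        have h3 : min (1/2 : ℝ) (ε / (2*M+1)) * (2*M) ≤ ε := by
          have h4 : min (1/2 : ℝ) (ε / (2*M+1)) ≤ ε / (2*M+1) := min_le_right _ _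
          have h5 : (0:ℝ) ≤ 2*M := by linarith
          calc min (1/2 : ℝ) (ε / (2*M+1)) * (2*M) ≤ (ε / (2*M+1)) * (2*M) :=
                mul_le_mul_of_nonneg_right h4 h5
            _ ≤ ε := by
                rw [div_mul_eq_mul_div, div_le_iff₀ (by linarith)]
                nlinarith
        linarith
      simpa using norm_le_zero_iff.mp this
    refine ⟨hcz, fun lam hlam hlam0 => ?_⟩
    have h1 := hrec n lam hlam
    rw [hP lam hlam hlam0, hcz] at h1
    have : lam * G (n+1) lam = 0 := by linear_combination -h1
    rcases mul_eq_zero.mp this with h | h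
    · exact absurd h hlam0
    · exact h
  have hPall : ∀ n : ℕ, ∀ lam : ℂ, ‖lam‖ < 1 → lam ≠ 0 → G n lam = 0 := by
    intro n
    induction n with
    | zero =>
      intro lam hlam _
      have := hC lam (by exact hlam)
      rw [hG]
      simp only
      rw [← this]
      apply intervalIntegral.integral_congr
      intro θ _
      simp [he, hE, mul_div_assoc, div_eq_mul_inv]
    | succ k ih =>
      exact (hkey k ih).2
  have hc : ∀ n : ℕ, c (n+1) = 0 := fun n => (hkey n (hPall n)).1
  intro n hn
  lift n to ℕ using (by linarith : (0:ℤ) ≤ n) with m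
  have hm : 1 ≤ m := by exact_mod_cast hn
  obtain ⟨k, rfl⟩ : ∃ k, m = k + 1 := ⟨m - 1, by omega⟩
  have h9 := hc k
  have hcast : (((((k+1:ℕ)):ℤ):ℂ)) = (((k+1:ℕ)):ℂ) := by push_cast; ring
  have h8 : ∀ θ ∈ Set.uIcc (0:ℝ) (2*π),
      w θ * Complex.exp (-(((((k+1:ℕ)):ℤ):ℂ)) * θ * Complex.I) = w θ * e (k+1) θ := by
    intro θ _
    rw [hcast]
  rw [intervalIntegral.integral_congr h8]
  exact h9
end

section
/- Let g : ℝ → ℂ be integrable on [0, 2π]. Suppose that ∫_0^{2π} g(θ) / (e^{iθ} − μ) dθ = 0 for every μ ∈ ℂ with |μ| > 1. Then ∫_0^{2π} g(θ) · e^{inθ} dθ = 0 for every integer n ≥ 0. -/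
open MeasureTheory Real

private lemma circle_ne (M : ℝ) (hM : 1 < M) (θ : ℝ) :
    Complex.exp (θ * Complex.I) - (M : ℂ) ≠ 0 := by
  intro h
  have h1 : ‖Complex.exp (θ * Complex.I)‖ = 1 :=
    Complex.norm_exp_ofReal_mul_I θ
  have h2 : Complex.exp (θ * Complex.I) = (M : ℂ) := sub_eq_zero.mp h
  rw [h2] at h1
  simp [Complex.norm_real, abs_of_pos (lt_trans one_pos hM)] at h1
  linarith

private lemma norm_sub_ge (M : ℝ) (hM : 1 < M) (θ : ℝ) :
    M - 1 ≤ ‖Complex.exp (θ * Complex.I) - (M : ℂ)‖ := by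
  have h1 : ‖Complex.exp (θ * Complex.I)‖ = 1 :=
    Complex.norm_exp_ofReal_mul_I θ
  have habM : ‖(M:ℂ)‖ = M := by
    simp [Complex.norm_real, abs_of_pos (lt_trans one_pos hM)]
  have key := norm_add_le ((M:ℂ) - Complex.exp (θ * Complex.I))
      (Complex.exp (θ * Complex.I))
  rw [sub_add_cancel, habM, h1] at key
  have : M - 1 ≤ ‖(M:ℂ) - Complex.exp (θ * Complex.I)‖ := by linarith
  rwa [norm_sub_rev] at this

private lemma key_nat (g : ℝ → ℂ)
    (hg : IntegrableOn g (Set.Icc 0 (2 * π)))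
    (hC : ∀ mu : ℂ, 1 < ‖mu‖ →
      ∫ θ in (0:ℝ)..(2 * π), g θ / (Complex.exp (θ * Complex.I) - mu) = 0) :
    ∀ n : ℕ, (∫ θ in (0:ℝ)..(2 * π), g θ * Complex.exp (θ * Complex.I) ^ n) = 0 := by
  have h2pi : (0:ℝ) ≤ 2 * π := by positivity
  have hgI : IntervalIntegrable g volume 0 (2 * π) := by
    apply MeasureTheory.IntegrableOn.intervalIntegrable
    rwa [Set.uIcc_of_le h2pi]
  -- integrability of g times a continuous function
  have hmul : ∀ φ : ℝ → ℂ, Continuous φ →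
      IntervalIntegrable (fun θ => g θ * φ θ) volume 0 (2 * π) := fun φ hφ =>
    hgI.mul_continuousOn hφ.continuousOn
  intro n
  induction n using Nat.strong_induction_on with
  | _ n IH =>
  set c : ℕ → ℂ := fun k => ∫ θ in (0:ℝ)..(2 * π), g θ * Complex.exp (θ * Complex.I) ^ k
    with hc
  show c n = 0
  -- the main estimate
  have hbound : ∀ M : ℝ, 1 < M → ‖c n‖ ≤
      (∫ θ in (0:ℝ)..(2 * π), ‖g θ‖) / (M - 1) := by
    intro M hM
    have hMne := circle_ne M hM
    have habM : ‖(M:ℂ)‖ = M := by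
      simp [Complex.norm_real, abs_of_pos (lt_trans one_pos hM)]
    have h0 : ∫ θ in (0:ℝ)..(2 * π), g θ / (Complex.exp (θ * Complex.I) - (M:ℂ)) = 0 :=
      hC (M:ℂ) (by rw [habM]; exact hM)
    -- continuity facts
    have hx : Continuous fun θ : ℝ => Complex.exp (θ * Complex.I) :=
      Complex.continuous_exp.comp (by continuity)
    have hden : Continuous fun θ : ℝ => (Complex.exp (θ * Complex.I) - (M:ℂ))⁻¹ :=
      (hx.sub continuous_const).inv₀ hMne
    -- pointwise identity
    have hpt : ∀ θ : ℝ,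
        g θ * (Complex.exp (θ * Complex.I) ^ (n + 1) / (Complex.exp (θ * Complex.I) - (M:ℂ)))
        = (M:ℂ) ^ (n + 1) * (g θ / (Complex.exp (θ * Complex.I) - (M:ℂ)))
          + ∑ i ∈ Finset.range (n + 1),
              (M:ℂ) ^ (n - i) * (g θ * Complex.exp (θ * Complex.I) ^ i) := by
      intro θ
      set x := Complex.exp (θ * Complex.I)
      have hgeom : (∑ i ∈ Finset.range (n + 1), x ^ i * (M:ℂ) ^ (n - i)) * (x - (M:ℂ))
          = x ^ (n + 1) - (M:ℂ) ^ (n + 1) := by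
        simpa using geom_sum₂_mul x ((M:ℂ)) (n + 1)
      have hne := hMne θ
      have hdiv : x ^ (n + 1) / (x - (M:ℂ)) = (M:ℂ) ^ (n + 1) / (x - (M:ℂ))
          + ∑ i ∈ Finset.range (n + 1), x ^ i * (M:ℂ) ^ (n - i) := by
        rw [eq_comm, div_add' _ _ _ (show x - (M:ℂ) ≠ 0 from hne),
          div_left_inj' (show x - (M:ℂ) ≠ 0 from hne)]
        linear_combination hgeom
      rw [hdiv, mul_add, Finset.mul_sum]
      congr 1
      · ring
      · exact Finset.sum_congr rfl fun i _ => by ring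
    -- integrability of pieces
    have hI1 : IntervalIntegrable
        (fun θ => g θ / (Complex.exp (θ * Complex.I) - (M:ℂ))) volume 0 (2 * π) := by
      simpa [div_eq_mul_inv] using hmul _ hden
    have hI2 : ∀ i : ℕ, IntervalIntegrable
        (fun θ => g θ * Complex.exp (θ * Complex.I) ^ i) volume 0 (2 * π) :=
      fun i => hmul _ (hx.pow i)
    have hIf : IntervalIntegrable
        (fun θ => g θ * (Complex.exp (θ * Complex.I) ^ (n + 1) /
          (Complex.exp (θ * Complex.I) - (M:ℂ)))) volume 0 (2 * π) := by
      have : Continuous fun θ : ℝ => Complex.exp (θ * Complex.I) ^ (n + 1) /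
          (Complex.exp (θ * Complex.I) - (M:ℂ)) := by
        simpa only [div_eq_mul_inv, Pi.pow_def, Pi.mul_def] using (hx.pow (n+1)).mul hden
      exact hmul _ this
    -- integral of f equals c n
    have hint : (∫ θ in (0:ℝ)..(2 * π),
        g θ * (Complex.exp (θ * Complex.I) ^ (n + 1) /
          (Complex.exp (θ * Complex.I) - (M:ℂ)))) = c n := by
      calc (∫ θ in (0:ℝ)..(2 * π),
            g θ * (Complex.exp (θ * Complex.I) ^ (n + 1) /
              (Complex.exp (θ * Complex.I) - (M:ℂ))))
          = ∫ θ in (0:ℝ)..(2 * π),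
            ((M:ℂ) ^ (n + 1) * (g θ / (Complex.exp (θ * Complex.I) - (M:ℂ)))
            + ∑ i ∈ Finset.range (n + 1),
                (M:ℂ) ^ (n - i) * (g θ * Complex.exp (θ * Complex.I) ^ i)) := by
            simp only [hpt]
        _ = (M:ℂ) ^ (n + 1) * (∫ θ in (0:ℝ)..(2 * π),
              g θ / (Complex.exp (θ * Complex.I) - (M:ℂ)))
            + ∑ i ∈ Finset.range (n + 1), (M:ℂ) ^ (n - i) * c i := by
            have hsumI : IntervalIntegrable (fun θ => ∑ i ∈ Finset.range (n + 1),
                (M:ℂ) ^ (n - i) * (g θ * Complex.exp (θ * Complex.I) ^ i)) volume 0 (2 * π) := by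
              have h := IntervalIntegrable.sum (μ := volume) (a := 0) (b := 2 * π)
                (Finset.range (n + 1))
                (f := fun i θ => (M:ℂ) ^ (n - i) * (g θ * Complex.exp (θ * Complex.I) ^ i))
                (fun i _ => (hI2 i).const_mul _)
              have heq : (∑ i ∈ Finset.range (n + 1),
                  fun θ => (M:ℂ) ^ (n - i) * (g θ * Complex.exp (θ * Complex.I) ^ i))
                  = fun θ => ∑ i ∈ Finset.range (n + 1),
                    (M:ℂ) ^ (n - i) * (g θ * Complex.exp (θ * Complex.I) ^ i) := by
                funext θ; simp
              rwa [heq] at h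
            rw [intervalIntegral.integral_add (hI1.const_mul _) hsumI,
              intervalIntegral.integral_const_mul,
              intervalIntegral.integral_finset_sum (fun i _ => (hI2 i).const_mul _)]
            simp only [intervalIntegral.integral_const_mul, hc]
        _ = c n := by
            rw [h0, mul_zero, zero_add, Finset.sum_range_succ]
            have : ∀ i ∈ Finset.range n, (M:ℂ) ^ (n - i) * c i = 0 := by
              intro i hi
              have : c i = 0 := IH i (Finset.mem_range.mp hi)
              rw [this, mul_zero]
            rw [Finset.sum_eq_zero this, zero_add, Nat.sub_self, pow_zero, one_mul]
    -- now bound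
    rw [← hint]
    have hnorm : ∀ θ ∈ Set.Icc (0:ℝ) (2 * π),
        ‖g θ * (Complex.exp (θ * Complex.I) ^ (n + 1) /
          (Complex.exp (θ * Complex.I) - (M:ℂ)))‖ ≤ ‖g θ‖ * (M - 1)⁻¹ := by
      intro θ _
      rw [norm_mul]
      apply mul_le_mul_of_nonneg_left _ (norm_nonneg _)
      rw [norm_div, norm_pow]
      have h1 : ‖Complex.exp (θ * Complex.I)‖ = 1 := Complex.norm_exp_ofReal_mul_I θ
      rw [h1, one_pow]
      rw [inv_eq_one_div]
      apply div_le_div_of_nonneg_left one_pos.le (by linarith)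
      exact norm_sub_ge M hM θ
    calc ‖(∫ θ in (0:ℝ)..(2 * π),
          g θ * (Complex.exp (θ * Complex.I) ^ (n + 1) /
            (Complex.exp (θ * Complex.I) - (M:ℂ))))‖
        ≤ ∫ θ in (0:ℝ)..(2 * π), ‖g θ * (Complex.exp (θ * Complex.I) ^ (n + 1) /
            (Complex.exp (θ * Complex.I) - (M:ℂ)))‖ :=
          intervalIntegral.norm_integral_le_integral_norm h2pi
      _ ≤ ∫ θ in (0:ℝ)..(2 * π), ‖g θ‖ * (M - 1)⁻¹ := by
          apply intervalIntegral.integral_mono_on h2pi hIf.norm (hgI.norm.mul_const _)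
          exact hnorm
      _ = (∫ θ in (0:ℝ)..(2 * π), ‖g θ‖) / (M - 1) := by
          rw [intervalIntegral.integral_mul_const, div_eq_mul_inv]
  -- take M → ∞
  set K := ∫ θ in (0:ℝ)..(2 * π), ‖g θ‖ with hK
  have htend : Filter.Tendsto (fun M : ℝ => K / (M - 1)) Filter.atTop (nhds 0) := by
    apply Filter.Tendsto.div_atTop tendsto_const_nhds
    exact Filter.tendsto_atTop_add_const_right _ _ Filter.tendsto_id
  have hle : ‖c n‖ ≤ 0 := by
    apply ge_of_tendsto htend
    filter_upwards [Filter.eventually_gt_atTop 1] with M hM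
    exact hbound M hM
  exact norm_eq_zero.mp (le_antisymm hle (norm_nonneg _))

/-- Dual Smirnov-theorem step on the unit circle: if the Cauchy transform of `g`
vanishes at every exterior point, then all Fourier coefficients of `g` of nonpositive
index vanish. -/
theorem fourier_coeffs_vanish_of_cauchy_transform_vanishes_outside
    (g : ℝ → ℂ)
    (hg : IntegrableOn g (Set.Icc 0 (2 * π)))
    (hC : ∀ mu : ℂ, 1 < ‖mu‖ →
      ∫ θ in (0:ℝ)..(2 * π), g θ / (Complex.exp (θ * Complex.I) - mu) = 0) :
    ∀ n : ℤ, 0 ≤ n →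
      ∫ θ in (0:ℝ)..(2 * π), g θ * Complex.exp ((n : ℂ) * θ * Complex.I) = 0 := by
  intro n hn
  obtain ⟨m, rfl⟩ := Int.eq_ofNat_of_zero_le hn
  have := key_nat g hg hC m
  rw [← this]
  apply intervalIntegral.integral_congr
  intro θ _
  simp only
  congr 1
  rw [mul_assoc]
  push_cast
  rw [Complex.exp_nat_mul]
end
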